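/- Let P be a Köthe set on a set I with P ≺ P², so that λ(P) is an algebra under pointwise multiplication. Then λ(P) has a multiplicative identity element if and only if ∑_{i∈I} p_i < ∞ for every p ∈ P (condition (U)); in that case the identity is the constant function 1 on I. -/

import Mathlib

/-- For a Köthe set `P` with `P ≺ P²`, the algebra `λ(P)` (with pointwise
multiplication) has a multiplicative identity iff `∑ᵢ pᵢ < ∞` for every `p ∈ P`
(condition (U)); in that case the identity is the constant function `1`. -/
theorem kothe_unital_iff {I : Type*} (P : Set (I → ℝ))
    (hP0 : ∀ p ∈ P, ∀ i, 0 ≤ p i)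
    (hP1 : ∀ i, ∃ p ∈ P, 0 < p i)
    (hP2 : ∀ p ∈ P, ∀ q ∈ P, ∃ r ∈ P, ∀ i, max (p i) (q i) ≤ r i)
    (hPP2 : ∀ p ∈ P, ∃ q ∈ P, ∃ C : ℝ, 0 < C ∧ ∀ i, p i ≤ C * (q i) ^ 2) :
    ((∃ e : I → ℂ, (∀ p ∈ P, Summable fun i => ‖e i‖ * p i) ∧
        ∀ a : I → ℂ, (∀ p ∈ P, Summable fun i => ‖a i‖ * p i) →
          (fun i => e i * a i) = a) ↔
      (∀ p ∈ P, Summable fun i => p i)) ∧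
    ((∀ p ∈ P, Summable fun i => p i) →
      ((∀ p ∈ P, Summable fun i => ‖(1 : ℂ)‖ * p i) ∧
        ∀ a : I → ℂ, (∀ p ∈ P, Summable fun i => ‖a i‖ * p i) →
          (fun i => (1 : ℂ) * a i) = a)) := by
  classical
  constructor
  · constructor
    · rintro ⟨e, he, hid⟩ p hp
      -- show e = 1
      have he1 : ∀ i, e i = 1 := by
        intro i
        set a : I → ℂ := fun j => if j = i then 1 else 0 with ha
        have hsum : ∀ q ∈ P, Summable fun j => ‖a j‖ * q j := by
          intro q hq
          apply summable_of_ne_finset_zero (s := {i})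
          intro j hj
          simp only [Finset.mem_singleton] at hj
          simp [ha, hj]
        have := congrFun (hid a hsum) i
        simpa [ha] using this
      have := he p hp
      simpa [he1] using this
    · intro hU
      exact ⟨fun _ => 1, fun p hp => by simpa using hU p hp,
        fun a _ => by funext i; simp⟩
  · intro hU
    exact ⟨fun p hp => by simpa using hU p hp, fun a _ => by funext i; simp⟩
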